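/- Assume m0, m1, m2 are not collinear, with u = m1 − m0, v = m2 − m0, d10 = ‖u‖, d20 = ‖v‖, and let b̄(t₁, t₂) = ⟨t₂·u − t₁·v, (d20² − t₂²)·u − (d10² − t₁²)·v⟩. Then there exists t ∈ ℝ² with b̄(t) = 0 and ∇b̄(t) = (0, 0) if and only if d10 = d20. Moreover, when d10 = d20, the zero set {t ∈ ℝ² : b̄(t) = 0} equals the union of the line {t₁ + t₂ = 0} and the conic {t₁² − (e + 1)·t₁·t₂ + t₂² + d10²·(e − 1) = 0}, where e = ⟨u, v⟩/(d10·d20). -/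

import Mathlib

set_option maxHeartbeats 2000000 in
theorem stmt11 (m0 m1 m2 : EuclideanSpace ℝ (Fin 2))
    (hnc : ¬ Collinear ℝ ({m0, m1, m2} : Set (EuclideanSpace ℝ (Fin 2))))
    (u v : EuclideanSpace ℝ (Fin 2)) (hu : u = m1 - m0) (hv : v = m2 - m0)
    (d10 d20 : ℝ) (hd10 : d10 = ‖u‖) (hd20 : d20 = ‖v‖)
    (bbar : ℝ × ℝ → ℝ)
    (hb : ∀ t : ℝ × ℝ,
      bbar t = (inner ℝ (t.2 • u - t.1 • v)
        ((d20 ^ 2 - t.2 ^ 2) • u - (d10 ^ 2 - t.1 ^ 2) • v) : ℝ))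
    (e : ℝ) (he : e = (inner ℝ u v : ℝ) / (d10 * d20)) :
    ((∃ t : ℝ × ℝ, bbar t = 0 ∧ fderiv ℝ bbar t = 0) ↔ d10 = d20) ∧
    (d10 = d20 →
      {t : ℝ × ℝ | bbar t = 0} =
        {t : ℝ × ℝ | t.1 + t.2 = 0} ∪
        {t : ℝ × ℝ | t.1 ^ 2 - (e + 1) * t.1 * t.2 + t.2 ^ 2 + d10 ^ 2 * (e - 1) = 0}) := by
  -- Strict Cauchy–Schwarz from non-collinearity
  have hb2 : (inner ℝ u v : ℝ) ^ 2 < d10 ^ 2 * d20 ^ 2 := by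
    rw [hd10, hd20]
    have hcol : (∃ r : ℝ, v = r • u) ∨ u = 0 → False := by
      intro h
      apply hnc
      rw [collinear_iff_exists_forall_eq_smul_vadd]
      rcases h with ⟨r, hr⟩ | h0
      · refine ⟨m0, u, ?_⟩
        intro p hp
        simp only [Set.mem_insert_iff, Set.mem_singleton_iff] at hp
        rcases hp with h | h | h <;> rw [h]
        · exact ⟨0, by simp⟩
        · exact ⟨1, by rw [one_smul, vadd_eq_add, hu]; abel⟩
        · exact ⟨r, by rw [← hr, vadd_eq_add, hv]; abel⟩
      · have hm : m1 = m0 := by rw [h0] at hu; exact sub_eq_zero.mp hu.symm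
        refine ⟨m0, v, ?_⟩
        intro p hp
        simp only [Set.mem_insert_iff, Set.mem_singleton_iff] at hp
        rcases hp with h | h | h <;> rw [h]
        · exact ⟨0, by simp⟩
        · exact ⟨0, by rw [hm]; simp⟩
        · exact ⟨1, by rw [one_smul, vadd_eq_add, hv]; abel⟩
    have habs : ¬ (‖u‖ * ‖v‖ ≤ |(inner ℝ u v : ℝ)|) := by
      intro hle
      rcases eq_or_ne u 0 with h0 | hune
      · exact hcol (Or.inr h0)
      rcases abs_cases (inner ℝ u v : ℝ) with ⟨hB, _⟩ | ⟨hB, _⟩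
      · have heq : ‖v‖ • u = ‖u‖ • v := by
          rw [← not_ne_iff]
          intro hne
          have hlt := inner_lt_norm_mul_iff_real.mpr hne
          rw [hB] at hle; linarith
        have h2 : (‖u‖⁻¹ * ‖v‖) • u = v := by
          have := congrArg (fun w => (‖u‖)⁻¹ • w) heq
          simp only [smul_smul] at this
          rwa [inv_mul_cancel₀ (by simpa using hune), one_smul] at this
        exact hcol (Or.inl ⟨_, h2.symm⟩)
      · have heq : ‖v‖ • (-u) = ‖-u‖ • v := by
          rw [← not_ne_iff]
          intro hne
          have hlt := inner_lt_norm_mul_iff_real.mpr hne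
          rw [inner_neg_left, norm_neg] at hlt
          rw [hB] at hle; linarith
        rw [norm_neg, smul_neg] at heq
        have h2 : -((‖u‖⁻¹ * ‖v‖) • u) = v := by
          have := congrArg (fun w => (‖u‖)⁻¹ • w) heq
          simp only [smul_neg, smul_smul] at this
          rwa [inv_mul_cancel₀ (by simpa using hune), one_smul] at this
        exact hcol (Or.inl ⟨-(‖u‖⁻¹ * ‖v‖), by rw [neg_smul]; exact h2.symm⟩)
    push_neg at habs
    nlinarith [abs_nonneg (inner ℝ u v : ℝ), sq_abs (inner ℝ u v : ℝ), norm_nonneg u, norm_nonneg v,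
      mul_nonneg (norm_nonneg u) (norm_nonneg v)]
  have hd10nn : 0 ≤ d10 := hd10 ▸ norm_nonneg u
  have hd20nn : 0 ≤ d20 := hd20 ▸ norm_nonneg v
  have hACpos : 0 < d10 ^ 2 * d20 ^ 2 := by nlinarith [sq_nonneg (inner ℝ u v : ℝ)]
  have hA : 0 < d10 ^ 2 := by nlinarith [sq_nonneg d10, sq_nonneg d20]
  have hC : 0 < d20 ^ 2 := by nlinarith [sq_nonneg d10, sq_nonneg d20]
  have hd10pos : 0 < d10 := lt_of_le_of_ne hd10nn (by rintro rfl; simp at hA)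
  have hd20pos : 0 < d20 := lt_of_le_of_ne hd20nn (by rintro rfl; simp at hC)
  -- Express bbar as an explicit polynomial
  have hbF : bbar = fun p : ℝ × ℝ =>
      d10 ^ 2 * d20 ^ 2 * (p.1 + p.2) - d10 ^ 2 * (p.2 * (p.2 * p.2))
        - d20 ^ 2 * (p.1 * (p.1 * p.1))
        - (inner ℝ u v : ℝ) * (d10 ^ 2 * p.2 + d20 ^ 2 * p.1 - p.1 * p.1 * p.2
            - p.1 * (p.2 * p.2)) := by
    funext t
    rw [hb t]
    simp only [inner_sub_left, inner_sub_right, real_inner_smul_left, real_inner_smul_right,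
      real_inner_comm v u]
    rw [real_inner_self_eq_norm_sq, real_inner_self_eq_norm_sq, ← hd10, ← hd20]
    ring
  subst hbF
  set B : ℝ := (inner ℝ u v : ℝ) with hBdef
  -- the derivative
  have hDeriv : ∀ x y : ℝ, HasFDerivAt
      (fun p : ℝ × ℝ =>
        d10 ^ 2 * d20 ^ 2 * (p.1 + p.2) - d10 ^ 2 * (p.2 * (p.2 * p.2))
          - d20 ^ 2 * (p.1 * (p.1 * p.1))
          - B * (d10 ^ 2 * p.2 + d20 ^ 2 * p.1 - p.1 * p.1 * p.2 - p.1 * (p.2 * p.2)))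
      ((d10 ^ 2 * d20 ^ 2 - 3 * d20 ^ 2 * x ^ 2 - B * (d20 ^ 2 - y ^ 2 - 2 * x * y)) •
          ContinuousLinearMap.fst ℝ ℝ ℝ
        + (d10 ^ 2 * d20 ^ 2 - 3 * d10 ^ 2 * y ^ 2 - B * (d10 ^ 2 - x ^ 2 - 2 * x * y)) •
          ContinuousLinearMap.snd ℝ ℝ ℝ) (x, y) := by
    intro x y
    have hx : HasFDerivAt (fun p : ℝ × ℝ => p.1) (ContinuousLinearMap.fst ℝ ℝ ℝ) (x, y) :=
      hasFDerivAt_fst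
    have hy : HasFDerivAt (fun p : ℝ × ℝ => p.2) (ContinuousLinearMap.snd ℝ ℝ ℝ) (x, y) :=
      hasFDerivAt_snd
    have h := ((((hx.add hy).const_mul (d10 ^ 2 * d20 ^ 2)).sub
        ((hy.mul (hy.mul hy)).const_mul (d10 ^ 2))).sub
        ((hx.mul (hx.mul hx)).const_mul (d20 ^ 2))).sub
      (((((hy.const_mul (d10 ^ 2)).add (hx.const_mul (d20 ^ 2))).sub
        ((hx.mul hx).mul hy)).sub (hx.mul (hy.mul hy))).const_mul B)
    refine h.congr_fderiv ?_
    refine ContinuousLinearMap.ext fun p => ?_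
    simp [ContinuousLinearMap.smul_apply]
    ring
  constructor
  · constructor
    · -- critical point implies d10 = d20
      rintro ⟨t, hbt, hft⟩
      have hD := hDeriv t.1 t.2
      rw [Prod.mk.eta] at hD
      have hL := hD.fderiv
      rw [hft] at hL
      have h1 : d10 ^ 2 * d20 ^ 2 - 3 * d20 ^ 2 * t.1 ^ 2
          - B * (d20 ^ 2 - t.2 ^ 2 - 2 * t.1 * t.2) = 0 := by
        have h := congrArg (fun L : ℝ × ℝ →L[ℝ] ℝ => L (1, 0)) hL
        simp at h
        linarith
      have h2 : d10 ^ 2 * d20 ^ 2 - 3 * d10 ^ 2 * t.2 ^ 2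
          - B * (d10 ^ 2 - t.1 ^ 2 - 2 * t.1 * t.2) = 0 := by
        have h := congrArg (fun L : ℝ × ℝ →L[ℝ] ℝ => L (0, 1)) hL
        simp at h
        linarith
      have hb0 : d10 ^ 2 * d20 ^ 2 * (t.1 + t.2) - d10 ^ 2 * (t.2 * (t.2 * t.2))
          - d20 ^ 2 * (t.1 * (t.1 * t.1))
          - B * (d10 ^ 2 * t.2 + d20 ^ 2 * t.1 - t.1 * t.1 * t.2 - t.1 * (t.2 * t.2)) = 0 := hbt
      have hE1 : d20 ^ 2 * (d10 ^ 2 - B) * t.1 + d10 ^ 2 * (d20 ^ 2 - B) * t.2 = 0 := by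
        linear_combination (3 / 2) * hb0 - (t.1 / 2) * h1 - (t.2 / 2) * h2
      have hE3 : d10 ^ 2 * t.2 ^ 3 + d20 ^ 2 * t.1 ^ 3 - B * (t.1 * t.2 * (t.1 + t.2)) = 0 := by
        linear_combination (1 / 2) * hb0 - (t.1 / 2) * h1 - (t.2 / 2) * h2
      have key1 : t.1 ^ 3 * (d10 ^ 2 * d20 ^ 2 * (d20 ^ 2 - d10 ^ 2)
          * (d10 ^ 2 * d20 ^ 2 - B ^ 2) ^ 2) = 0 := by
        linear_combination (d10 ^ 2 * (d20 ^ 2 - B)) ^ 3 * hE3 -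
          (t.1 ^ 2 * ((d10 ^ 2) ^ 3 * (d20 ^ 2) ^ 2 - (d10 ^ 2) ^ 2 * B ^ 3
              + (d10 ^ 2) ^ 2 * B ^ 2 * d20 ^ 2 - 2 * (d10 ^ 2) ^ 2 * B * (d20 ^ 2) ^ 2
              + d10 ^ 2 * B ^ 3 * d20 ^ 2)
            + t.1 * t.2 * ((d10 ^ 2) ^ 3 * B * d20 ^ 2 - (d10 ^ 2) ^ 3 * (d20 ^ 2) ^ 2
              - (d10 ^ 2) ^ 2 * B ^ 3 + (d10 ^ 2) ^ 2 * B ^ 2 * d20 ^ 2)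
            + t.2 ^ 2 * ((d10 ^ 2) ^ 3 * B ^ 2 - 2 * (d10 ^ 2) ^ 3 * B * d20 ^ 2
              + (d10 ^ 2) ^ 3 * (d20 ^ 2) ^ 2)) * hE1
      have key2 : t.2 ^ 3 * (d10 ^ 2 * d20 ^ 2 * (d20 ^ 2 - d10 ^ 2)
          * (d10 ^ 2 * d20 ^ 2 - B ^ 2) ^ 2) = 0 := by
        linear_combination (t.1 ^ 2 * ((d10 ^ 2) ^ 2 * (d20 ^ 2) ^ 3
              - 2 * d10 ^ 2 * B * (d20 ^ 2) ^ 3 + B ^ 2 * (d20 ^ 2) ^ 3)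
            + t.1 * t.2 * (-((d10 ^ 2) ^ 2 * (d20 ^ 2) ^ 3)
              + d10 ^ 2 * B ^ 2 * (d20 ^ 2) ^ 2 + d10 ^ 2 * B * (d20 ^ 2) ^ 3
              - B ^ 3 * (d20 ^ 2) ^ 2)
            + t.2 ^ 2 * (-2 * (d10 ^ 2) ^ 2 * B * (d20 ^ 2) ^ 2
              + (d10 ^ 2) ^ 2 * (d20 ^ 2) ^ 3 + d10 ^ 2 * B ^ 3 * d20 ^ 2
              + d10 ^ 2 * B ^ 2 * (d20 ^ 2) ^ 2 - B ^ 3 * (d20 ^ 2) ^ 2)) * hE1 -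
          (d20 ^ 2 * (d10 ^ 2 - B)) ^ 3 * hE3
      have hsq : d10 ^ 2 = d20 ^ 2 := by
        by_contra hne
        have hKne : d10 ^ 2 * d20 ^ 2 * (d20 ^ 2 - d10 ^ 2)
            * (d10 ^ 2 * d20 ^ 2 - B ^ 2) ^ 2 ≠ 0 := by
          have h2' : d20 ^ 2 - d10 ^ 2 ≠ 0 := sub_ne_zero.mpr (Ne.symm hne)
          have h3' : 0 < d10 ^ 2 * d20 ^ 2 - B ^ 2 := by linarith
          exact mul_ne_zero (mul_ne_zero hACpos.ne' h2') (pow_ne_zero 2 h3'.ne')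
        have ht1 : t.1 = 0 :=
          pow_eq_zero_iff (by norm_num : (3 : ℕ) ≠ 0) |>.mp
            ((mul_eq_zero.mp key1).resolve_right hKne)
        have ht2 : t.2 = 0 :=
          pow_eq_zero_iff (by norm_num : (3 : ℕ) ≠ 0) |>.mp
            ((mul_eq_zero.mp key2).resolve_right hKne)
        rw [ht1, ht2] at h1 h2
        have hA1 : d20 ^ 2 * (d10 ^ 2 - B) = 0 := by linear_combination h1
        have hC1 : d10 ^ 2 * (d20 ^ 2 - B) = 0 := by linear_combination h2
        have e1 := (mul_eq_zero.mp hA1).resolve_left hC.ne'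
        have e2 := (mul_eq_zero.mp hC1).resolve_left hA.ne'
        exact hne (by linarith)
      rw [← Real.sqrt_sq hd10nn, ← Real.sqrt_sq hd20nn, hsq]
    · -- d10 = d20 implies singular point exists
      intro hdd
      have hBe : B = e * d10 ^ 2 := by
        rw [he, ← hdd]
        field_simp [hd10pos.ne']
      have hb2' : (e * d10 ^ 2) ^ 2 < d10 ^ 2 * d10 ^ 2 := by
        have h := hb2
        rw [← hdd, hBe] at h
        exact h
      have hee : e ^ 2 < 1 := by nlinarith [pow_pos hd10pos 2, pow_pos hd10pos 4]
      have he1 : e < 1 := by nlinarith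
      have he2 : -1 < e := by nlinarith
      have h3e : (0 : ℝ) < 3 + e := by linarith
      have hfrac : 0 ≤ (1 - e) / (3 + e) := div_nonneg (by linarith) h3e.le
      set r : ℝ := d10 * Real.sqrt ((1 - e) / (3 + e)) with hrdef
      have hr2 : r ^ 2 = d10 ^ 2 * ((1 - e) / (3 + e)) := by
        rw [hrdef, mul_pow, Real.sq_sqrt hfrac]
      refine ⟨(r, -r), ?_, ?_⟩
      · show d10 ^ 2 * d20 ^ 2 * (r + -r) - d10 ^ 2 * (-r * (-r * -r))
          - d20 ^ 2 * (r * (r * r))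
          - B * (d10 ^ 2 * -r + d20 ^ 2 * r - r * r * -r - r * (-r * -r)) = 0
        rw [← hdd]
        ring
      · have hr2' : (3 + e) * r ^ 2 = d10 ^ 2 * (1 - e) := by
          rw [hr2]
          field_simp
        have hz1 : d10 ^ 2 * d20 ^ 2 - 3 * d20 ^ 2 * r ^ 2
            - B * (d20 ^ 2 - (-r) ^ 2 - 2 * r * -r) = 0 := by
          linear_combination (-(d10 + d20) * ((1 - e) * d10 ^ 2 - 3 * r ^ 2)) * hdd +
            (-(d20 ^ 2 + r ^ 2)) * hBe + (-(d10 ^ 2)) * hr2'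
        have hz2 : d10 ^ 2 * d20 ^ 2 - 3 * d10 ^ 2 * (-r) ^ 2
            - B * (d10 ^ 2 - r ^ 2 - 2 * r * -r) = 0 := by
          linear_combination (-(d10 + d20) * d10 ^ 2) * hdd +
            (-(d10 ^ 2 + r ^ 2)) * hBe + (-(d10 ^ 2)) * hr2'
        have hD := hDeriv r (-r)
        rw [hz1, hz2] at hD
        simp only [zero_smul, add_zero] at hD
        exact hD.fderiv
  · -- the zero-set decomposition
    intro hdd
    have hBe : B = e * d10 ^ 2 := by
      rw [he, ← hdd]
      field_simp [hd10pos.ne']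
    ext t
    simp only [Set.mem_setOf_eq, Set.mem_union]
    have hfac : d10 ^ 2 * d20 ^ 2 * (t.1 + t.2) - d10 ^ 2 * (t.2 * (t.2 * t.2))
        - d20 ^ 2 * (t.1 * (t.1 * t.1))
        - B * (d10 ^ 2 * t.2 + d20 ^ 2 * t.1 - t.1 * t.1 * t.2 - t.1 * (t.2 * t.2))
        = -(d10 ^ 2) * ((t.1 + t.2) *
            (t.1 ^ 2 - (e + 1) * t.1 * t.2 + t.2 ^ 2 + d10 ^ 2 * (e - 1))) := by
      rw [hBe, ← hdd]
      ring
    rw [hfac, mul_eq_zero, mul_eq_zero]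
    have hne : -(d10 ^ 2) ≠ 0 := neg_ne_zero.mpr (pow_ne_zero 2 hd10pos.ne')
    simp [hne]
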